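/- Let w₀,...,w_{m-1} be a system of weight functions on [a,b] (w_j positive and C^{m-1-j}), with associated generalized derivatives L₀F = F/w₀ and L_jF = (1/w_j) D(L_{j-1}F) for j = 1,...,m-1. Then the set of C^{m-1} functions F on [a,b] with L_{m-1}F constant is an m-dimensional vector space, and every nonzero element of it has at most m-1 zeros in [a,b] counted with multiplicities up to m. -/

import Mathlib

open Set Filter Topology

def VanishesTo (F : ℝ → ℝ) (x : ℝ) (μ : ℕ) : Prop :=
  ∀ r < μ, iteratedDeriv r F x = 0

def AtMostZeros (m : ℕ) (I : Set ℝ) (F : ℝ → ℝ) : Prop :=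
  ∀ (h : ℕ) (τ : Fin h → ℝ) (μ : Fin h → ℕ),
    Function.Injective τ → (∀ j, τ j ∈ I) → (∀ j, 1 ≤ μ j ∧ μ j ≤ m) →
    (∑ j, μ j) = m → ¬ (∀ j, VanishesTo F (τ j) (μ j))

/-- Generalized derivatives associated with a system of weight functions:
`genDeriv w 0 F = F / w₀`, `genDeriv w (j+1) F = (D (genDeriv w j F)) / w_{j+1}`. -/
noncomputable def genDeriv (w : ℕ → ℝ → ℝ) : ℕ → (ℝ → ℝ) → (ℝ → ℝ)
  | 0 => fun F x => F x / w 0 x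
  | (j + 1) => fun F x => deriv (genDeriv w j F) x / w (j + 1) x



lemma vanishesTo_deriv {F : ℝ → ℝ} {x : ℝ} {μ : ℕ} (h : VanishesTo F x (μ + 1)) :
    VanishesTo (deriv F) x μ := by
  intro r hr
  have := h (r + 1) (by omega)
  rwa [iteratedDeriv_succ'] at this

lemma iteratedDerivWithin_of_isOpen' {f : ℝ → ℝ} {U : Set ℝ} (hU : IsOpen U) {x : ℝ}
    (hx : x ∈ U) (n : ℕ) : iteratedDerivWithin n f U x = iteratedDeriv n f x := by
  simp only [iteratedDerivWithin, iteratedDeriv, iteratedFDerivWithin_of_isOpen n hU hx]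

lemma iteratedDeriv_add_point {f g : ℝ → ℝ} {U : Set ℝ} (hU : IsOpen U) {x : ℝ} (hx : x ∈ U)
    {n : ℕ} (hf : ContDiffOn ℝ n f U) (hg : ContDiffOn ℝ n g U) :
    iteratedDeriv n (fun y => f y + g y) x = iteratedDeriv n f x + iteratedDeriv n g x := by
  rw [← iteratedDerivWithin_of_isOpen' hU hx (f := f), ← iteratedDerivWithin_of_isOpen' hU hx (f := g),
      ← iteratedDerivWithin_of_isOpen' hU hx (f := fun y => f y + g y)]
  exact iteratedDerivWithin_add hx hU.uniqueDiffOn (hf x hx) (hg x hx)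

lemma natcast_sub_one_add_one {n : ℕ} (hn : 1 ≤ n) :
    ((n - 1 : ℕ) : WithTop ℕ∞) + 1 = (n : ℕ) := by
  rw [← Nat.cast_add_one]
  norm_cast
  omega

lemma ContDiffOn.differentiableAt_of_isOpen {f : ℝ → ℝ} {U : Set ℝ} {n : ℕ}
    (hf : ContDiffOn ℝ n f U) (hU : IsOpen U) (hn : 1 ≤ n) {x : ℝ} (hx : x ∈ U) :
    DifferentiableAt ℝ f x :=
  (hf.differentiableOn (by exact_mod_cast (by omega : n ≠ 0))).differentiableAt (hU.mem_nhds hx)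

lemma vanishesTo_mul {U : Set ℝ} (hU : IsOpen U) {x : ℝ} (hx : x ∈ U) :
    ∀ (μ n : ℕ), μ ≤ n + 1 → ∀ (f g : ℝ → ℝ), ContDiffOn ℝ n f U → ContDiffOn ℝ n g U →
    VanishesTo f x μ → VanishesTo (fun y => f y * g y) x μ := by
  intro μ
  induction μ with
  | zero => intro n _ f g _ _ _ r hr; omega
  | succ μ ih =>
    intro n hn f g hf hg hv r hr
    cases r with
    | zero =>
      simp only [iteratedDeriv_zero]
      have h0 : f x = 0 := by simpa using hv 0 (by omega)
      rw [h0, zero_mul]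
    | succ r =>
      have hn1 : 1 ≤ n := by omega
      have hfd : ∀ y ∈ U, DifferentiableAt ℝ f y :=
        fun y hy => hf.differentiableAt_of_isOpen hU hn1 hy
      have hgd : ∀ y ∈ U, DifferentiableAt ℝ g y :=
        fun y hy => hg.differentiableAt_of_isOpen hU hn1 hy
      rw [iteratedDeriv_succ']
      have hev : (deriv fun z => f z * g z) =ᶠ[𝓝 x]
          (fun y => deriv f y * g y + f y * deriv g y) := by
        filter_upwards [hU.mem_nhds hx] with y hy
        exact ((hfd y hy).hasDerivAt.mul (hgd y hy).hasDerivAt).deriv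
      rw [hev.iteratedDeriv_eq r]
      have hcast : ((n - 1 : ℕ) : WithTop ℕ∞) + 1 = (n : ℕ) := natcast_sub_one_add_one hn1
      have hf' : ContDiffOn ℝ ((n - 1 : ℕ)) (deriv f) U :=
        hf.deriv_of_isOpen hU (le_of_eq hcast)
      have hg' : ContDiffOn ℝ ((n - 1 : ℕ)) (deriv g) U :=
        hg.deriv_of_isOpen hU (le_of_eq hcast)
      have hfn : ContDiffOn ℝ ((n - 1 : ℕ)) f U := hf.of_le (by rw [← hcast]; exact le_self_add)
      have hgn : ContDiffOn ℝ ((n - 1 : ℕ)) g U := hg.of_le (by rw [← hcast]; exact le_self_add)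
      have h1 : ContDiffOn ℝ ((n - 1 : ℕ)) (fun y => deriv f y * g y) U := hf'.mul hgn
      have h2 : ContDiffOn ℝ ((n - 1 : ℕ)) (fun y => f y * deriv g y) U := hfn.mul hg'
      have hle : ((r : ℕ) : WithTop ℕ∞) ≤ ((n - 1 : ℕ) : WithTop ℕ∞) := by
        exact_mod_cast Nat.cast_le.mpr (by omega : r ≤ n - 1)
      rw [iteratedDeriv_add_point hU hx (h1.of_le hle) (h2.of_le hle)]
      have e1 := ih (n - 1) (by omega) (deriv f) g hf' hgn (vanishesTo_deriv hv) r (by omega)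
      have e2 := ih (n - 1) (by omega) f (deriv g) hfn hg'
        (fun s hs => hv s (by omega)) r (by omega)
      rw [e1, e2, add_zero]




lemma rolle_count (a b : ℝ) (H : ℝ → ℝ)
    (hd : ∀ x ∈ Set.Icc a b, DifferentiableAt ℝ H x) :
    ∀ (S : Finset ℝ) (hne : S.Nonempty) (μ : ℝ → ℕ),
      ↑S ⊆ Set.Icc a b → (∀ x ∈ S, 1 ≤ μ x) → (∀ x ∈ S, VanishesTo H x (μ x)) →
      ∃ (S' : Finset ℝ) (μ' : ℝ → ℕ),
        ↑S' ⊆ Set.Icc (S.min' hne) (S.max' hne) ∧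
        (∀ x ∈ S', 1 ≤ μ' x ∧ (μ' x = 1 ∨ ∃ y ∈ S, μ' x + 1 ≤ μ y)) ∧
        ((∑ x ∈ S', μ' x) + 1 = ∑ x ∈ S, μ x) ∧
        (∀ x ∈ S', VanishesTo (deriv H) x (μ' x)) := by
  intro S
  induction S using Finset.strongInduction with
  | _ S IH =>
  intro hne μ hsub h1 hv
  set M := S.max' hne with hM
  have hMS : M ∈ S := S.max'_mem hne
  rcases eq_or_ne (S.erase M) ∅ with h0 | h0
  · -- S = {M}
    have hSM : S = {M} := by
      apply Finset.eq_singleton_iff_unique_mem.mpr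
      exact ⟨hMS, fun y hy => by
        by_contra hne'
        exact absurd (Finset.mem_erase.mpr ⟨hne', hy⟩) (by simp [h0])⟩
    rcases eq_or_lt_of_le (h1 M hMS) with hμ1 | hμ2
    · refine ⟨∅, fun _ => 1, by simp, by simp, ?_, by simp⟩
      simp [hSM, ← hμ1]
    · refine ⟨{M}, fun _ => μ M - 1, ?_, ?_, ?_, ?_⟩
      · intro x hx
        simp only [Finset.coe_singleton, Set.mem_singleton_iff] at hx
        subst hx
        exact ⟨Finset.min'_le S M hMS, Finset.le_max' S M hMS⟩
      · intro x hx
        exact ⟨by show 1 ≤ μ M - 1; omega, Or.inr ⟨M, hMS, by show μ M - 1 + 1 ≤ μ M; omega⟩⟩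
      · simp [hSM]; omega
      · intro x hx
        simp only [Finset.mem_singleton] at hx
        subst hx
        have : μ M - 1 + 1 = μ M := by omega
        exact vanishesTo_deriv (by rw [this]; exact hv M hMS)
  · -- S has at least two elements
    set S₀ := S.erase M with hS₀
    have hne₀ : S₀.Nonempty := Finset.nonempty_iff_ne_empty.mpr h0
    have hssub : S₀ ⊂ S := Finset.erase_ssubset hMS
    have hsub₀ : ↑S₀ ⊆ Set.Icc a b := fun x hx => hsub (Finset.mem_coe.mpr (Finset.mem_of_mem_erase hx))
    obtain ⟨S', μ', hsub', hbd', hsum', hv'⟩ :=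
      IH S₀ hssub hne₀ μ hsub₀ (fun x hx => h1 x (Finset.mem_of_mem_erase hx))
        (fun x hx => hv x (Finset.mem_of_mem_erase hx))
    set M₀ := S₀.max' hne₀ with hM₀
    have hM₀S : M₀ ∈ S := Finset.mem_of_mem_erase (S₀.max'_mem hne₀)
    have hM₀M : M₀ < M := by
      have h1' : M₀ ≤ M := Finset.le_max' S M₀ hM₀S
      have h2' : M₀ ≠ M := Finset.ne_of_mem_erase (S₀.max'_mem hne₀)
      exact lt_of_le_of_ne h1' h2'
    -- Rolle on [M₀, M]
    have hIccsub : Set.Icc M₀ M ⊆ Set.Icc a b := by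
      apply Set.Icc_subset_Icc
      · exact (hsub hM₀S).1
      · exact (hsub hMS).2
    obtain ⟨ρ, hρmem, hρ⟩ : ∃ c ∈ Set.Ioo M₀ M, deriv H c = 0 := by
      apply exists_deriv_eq_zero hM₀M
      · exact fun x hx => (hd x (hIccsub hx)).continuousAt.continuousWithinAt
      · have e1 : H M₀ = 0 := by
          have := hv M₀ hM₀S 0 (h1 M₀ hM₀S)
          simpa using this
        have e2 : H M = 0 := by
          have := hv M hMS 0 (h1 M hMS)
          simpa using this
        rw [e1, e2]
    -- ρ and M are new points
    have hρS' : ρ ∉ S' := by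
      intro hmem
      have := (hsub' hmem).2
      exact absurd this (not_le.mpr hρmem.1)
    have hMρ : M ≠ ρ := (ne_of_gt hρmem.2)
    have hMS' : M ∉ S' := by
      intro hmem
      have := (hsub' hmem).2
      exact absurd this (not_le.mpr hM₀M)
    have hS'M₀ : ∀ x ∈ S', x ≤ M₀ := fun x hx => (hsub' hx).2
    have hminS₀ : S.min' hne ≤ S₀.min' hne₀ :=
      Finset.min'_le S _ (Finset.mem_of_mem_erase (S₀.min'_mem hne₀))
    have hminM₀ : S.min' hne ≤ M₀ := Finset.min'_le S M₀ hM₀S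
    set μ'' : ℝ → ℕ := fun x => if x = M then μ M - 1 else if x = ρ then 1 else μ' x with hμ''
    have hμ''S' : ∀ x ∈ S', μ'' x = μ' x := by
      intro x hx
      have hxM : x ≠ M := ne_of_lt (lt_of_le_of_lt (hS'M₀ x hx) hM₀M)
      have hxρ : x ≠ ρ := ne_of_lt (lt_of_le_of_lt (hS'M₀ x hx) hρmem.1)
      simp [hμ'', hxM, hxρ]
    have hμ''ρ : μ'' ρ = 1 := by simp [hμ'', hMρ.symm]
    have hμ''M : μ'' M = μ M - 1 := by simp [hμ'']
    have hsumS : μ M + ∑ x ∈ S₀, μ x = ∑ x ∈ S, μ x := Finset.add_sum_erase S μ hMS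
    have hsum1 : ∑ x ∈ insert ρ S', μ'' x = 1 + ∑ x ∈ S', μ' x := by
      rw [Finset.sum_insert hρS', hμ''ρ, Finset.sum_congr rfl hμ''S']
    have hvan'' : ∀ x ∈ insert ρ S', VanishesTo (deriv H) x (μ'' x) := by
      intro x hx
      rcases Finset.mem_insert.mp hx with rfl | hx'
      · rw [hμ''ρ]; intro r hr
        have hr0 : r = 0 := by omega
        subst hr0; simpa using hρ
      · rw [hμ''S' x hx']; exact hv' x hx'
    have hsub'' : ∀ x ∈ insert ρ S', x ∈ Set.Icc (S.min' hne) (S.max' hne) := by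
      intro x hx
      rcases Finset.mem_insert.mp hx with rfl | hx'
      · exact ⟨le_trans hminM₀ (le_of_lt hρmem.1), le_of_lt hρmem.2⟩
      · have hmem := hsub' hx'
        exact ⟨le_trans hminS₀ hmem.1, le_trans hmem.2 (le_of_lt hM₀M)⟩
    have hbd'' : ∀ x ∈ insert ρ S', 1 ≤ μ'' x ∧ (μ'' x = 1 ∨ ∃ y ∈ S, μ'' x + 1 ≤ μ y) := by
      intro x hx
      rcases Finset.mem_insert.mp hx with rfl | hx'
      · rw [hμ''ρ]; exact ⟨le_refl 1, Or.inl rfl⟩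
      · rw [hμ''S' x hx']
        obtain ⟨hb1, hb2⟩ := hbd' x hx'
        refine ⟨hb1, ?_⟩
        rcases hb2 with h | ⟨y, hy, hle⟩
        · exact Or.inl h
        · exact Or.inr ⟨y, Finset.mem_of_mem_erase hy, hle⟩
    rcases eq_or_lt_of_le (h1 M hMS) with hc | hc
    · refine ⟨insert ρ S', μ'', hsub'', hbd'', ?_, hvan''⟩
      rw [hsum1]; omega
    · refine ⟨insert M (insert ρ S'), μ'', ?_, ?_, ?_, ?_⟩
      · intro x hx
        rcases Finset.mem_insert.mp hx with rfl | hx'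
        · exact ⟨Finset.min'_le S M hMS, Finset.le_max' S M hMS⟩
        · exact hsub'' x hx'
      · intro x hx
        rcases Finset.mem_insert.mp hx with rfl | hx'
        · rw [hμ''M]; exact ⟨by omega, Or.inr ⟨M, hMS, by omega⟩⟩
        · exact hbd'' x hx'
      · rw [Finset.sum_insert (by simp [hρS', hMρ, hMS', Finset.mem_insert]), hμ''M, hsum1]; omega
      · intro x hx
        rcases Finset.mem_insert.mp hx with rfl | hx'
        · rw [hμ''M]
          have heq : μ M - 1 + 1 = μ M := by omega
          exact vanishesTo_deriv (by rw [heq]; exact hv M hMS)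
        · exact hvan'' x hx'



lemma natcast_succ_eq {p q : ℕ} (h : p + 1 = q) : ((p : ℕ) : WithTop ℕ∞) + 1 = (q : ℕ) := by
  exact_mod_cast congrArg (Nat.cast : ℕ → WithTop ℕ∞) h

lemma ContDiffOn.differentiableAt_of_isOpen' {f : ℝ → ℝ} {U : Set ℝ} {n : ℕ}
    (hf : ContDiffOn ℝ n f U) (hU : IsOpen U) (hn : 1 ≤ n) {x : ℝ} (hx : x ∈ U) :
    DifferentiableAt ℝ f x :=
  (hf.differentiableOn (by exact_mod_cast (by omega : n ≠ 0))).differentiableAt (hU.mem_nhds hx)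

section genDerivLemmas

variable {U : Set ℝ} {m : ℕ} {w : ℕ → ℝ → ℝ}

lemma genDeriv_smooth (hU : IsOpen U)
    (hw : ∀ j < m, ContDiffOn ℝ ((m - 1 - j : ℕ)) (w j) U)
    (hw0 : ∀ j < m, ∀ x ∈ U, w j x ≠ 0)
    {F : ℝ → ℝ} (hF : ContDiffOn ℝ ((m - 1 : ℕ)) F U) :
    ∀ j < m, ContDiffOn ℝ ((m - 1 - j : ℕ)) (genDeriv w j F) U := by
  intro j
  induction j with
  | zero =>
    intro hj
    show ContDiffOn ℝ ((m - 1 - 0 : ℕ)) (fun x => F x / w 0 x) U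
    rw [show m - 1 - 0 = m - 1 from rfl]
    exact hF.div (by simpa using hw 0 hj) (hw0 0 hj)
  | succ j IH =>
    intro hj
    have hjm : j < m := by omega
    have hcast : ((m - 1 - (j + 1) : ℕ) : WithTop ℕ∞) + 1 = ((m - 1 - j : ℕ) : ℕ) :=
      natcast_succ_eq (by omega)
    have hder : ContDiffOn ℝ ((m - 1 - (j + 1) : ℕ)) (deriv (genDeriv w j F)) U :=
      (IH hjm).deriv_of_isOpen hU (le_of_eq hcast)
    exact hder.div (hw (j + 1) hj) (hw0 (j + 1) hj)

lemma genDeriv_differentiableAt (hU : IsOpen U)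
    (hw : ∀ j < m, ContDiffOn ℝ ((m - 1 - j : ℕ)) (w j) U)
    (hw0 : ∀ j < m, ∀ x ∈ U, w j x ≠ 0)
    {F : ℝ → ℝ} (hF : ContDiffOn ℝ ((m - 1 : ℕ)) F U)
    {j : ℕ} (hj : j + 1 < m) {x : ℝ} (hx : x ∈ U) :
    DifferentiableAt ℝ (genDeriv w j F) x :=
  (genDeriv_smooth hU hw hw0 hF j (by omega)).differentiableAt_of_isOpen' hU (by omega) hx

lemma genDeriv_add (hU : IsOpen U)
    (hw : ∀ j < m, ContDiffOn ℝ ((m - 1 - j : ℕ)) (w j) U)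
    (hw0 : ∀ j < m, ∀ x ∈ U, w j x ≠ 0)
    {F G : ℝ → ℝ} (hF : ContDiffOn ℝ ((m - 1 : ℕ)) F U) (hG : ContDiffOn ℝ ((m - 1 : ℕ)) G U) :
    ∀ j < m, ∀ x ∈ U, genDeriv w j (fun y => F y + G y) x
      = genDeriv w j F x + genDeriv w j G x := by
  intro j
  induction j with
  | zero =>
    intro hj x hx
    show (F x + G x) / w 0 x = F x / w 0 x + G x / w 0 x
    rw [add_div]
  | succ j IH =>
    intro hj x hx
    have hjm : j < m := by omega
    have hev : (genDeriv w j fun y => F y + G y) =ᶠ[𝓝 x]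
        (fun y => genDeriv w j F y + genDeriv w j G y) := by
      filter_upwards [hU.mem_nhds hx] with y hy
      exact IH hjm y hy
    show deriv (genDeriv w j fun y => F y + G y) x / w (j + 1) x = _
    rw [hev.deriv_eq]
    have hdF : DifferentiableAt ℝ (genDeriv w j F) x :=
      genDeriv_differentiableAt hU hw hw0 hF hj hx
    have hdG : DifferentiableAt ℝ (genDeriv w j G) x :=
      genDeriv_differentiableAt hU hw hw0 hG hj hx
    rw [deriv_fun_add hdF hdG, add_div]
    rfl

lemma genDeriv_const_mul (hU : IsOpen U)
    (hw : ∀ j < m, ContDiffOn ℝ ((m - 1 - j : ℕ)) (w j) U)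
    (hw0 : ∀ j < m, ∀ x ∈ U, w j x ≠ 0)
    {F : ℝ → ℝ} (hF : ContDiffOn ℝ ((m - 1 : ℕ)) F U) (c : ℝ) :
    ∀ j < m, ∀ x ∈ U, genDeriv w j (fun y => c * F y) x = c * genDeriv w j F x := by
  intro j
  induction j with
  | zero =>
    intro hj x hx
    show (c * F x) / w 0 x = c * (F x / w 0 x)
    rw [mul_div_assoc]
  | succ j IH =>
    intro hj x hx
    have hjm : j < m := by omega
    have hev : (genDeriv w j fun y => c * F y) =ᶠ[𝓝 x]
        (fun y => c * genDeriv w j F y) := by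
      filter_upwards [hU.mem_nhds hx] with y hy
      exact IH hjm y hy
    show deriv (genDeriv w j fun y => c * F y) x / w (j + 1) x = _
    rw [hev.deriv_eq]
    have hdF : DifferentiableAt ℝ (genDeriv w j F) x :=
      genDeriv_differentiableAt hU hw hw0 hF hj hx
    rw [deriv_const_mul c hdF, mul_div_assoc]
    rfl

lemma genDeriv_zero_fun (hU : IsOpen U) :
    ∀ (j : ℕ), ∀ x ∈ U, genDeriv w j (fun _ => (0 : ℝ)) x = 0 := by
  intro j
  induction j with
  | zero => intro x hx; show (0 : ℝ) / w 0 x = 0; rw [zero_div]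
  | succ j IH =>
    intro x hx
    have hev : (genDeriv w j fun _ => (0 : ℝ)) =ᶠ[𝓝 x] (fun _ => (0 : ℝ)) := by
      filter_upwards [hU.mem_nhds hx] with y hy
      exact IH y hy
    show deriv (genDeriv w j fun _ => (0 : ℝ)) x / w (j + 1) x = 0
    rw [hev.deriv_eq, deriv_const, zero_div]

lemma genDeriv_sum (hU : IsOpen U)
    (hw : ∀ j < m, ContDiffOn ℝ ((m - 1 - j : ℕ)) (w j) U)
    (hw0 : ∀ j < m, ∀ x ∈ U, w j x ≠ 0)
    {ι : Type*} [DecidableEq ι] (s : Finset ι) (F : ι → ℝ → ℝ)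
    (hF : ∀ i, ContDiffOn ℝ ((m - 1 : ℕ)) (F i) U) :
    ∀ j < m, ∀ x ∈ U, genDeriv w j (fun y => ∑ i ∈ s, F i y) x
      = ∑ i ∈ s, genDeriv w j (F i) x := by
  induction s using Finset.induction with
  | empty =>
    intro j hj x hx
    simpa using genDeriv_zero_fun hU j x hx
  | insert i₀ s hni IH =>
    intro j hj x hx
    have hsum : ContDiffOn ℝ ((m - 1 : ℕ)) (fun y => ∑ i ∈ s, F i y) U := by
      apply ContDiffOn.sum
      intro i _
      exact hF i
    have he : (fun y => ∑ i ∈ insert i₀ s, F i y)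
        = (fun y => F i₀ y + ∑ i ∈ s, F i y) := by
      funext y
      rw [Finset.sum_insert hni]
    rw [he, genDeriv_add hU hw hw0 (hF i₀) hsum j hj x hx, Finset.sum_insert hni,
      IH j hj x hx]

lemma genDeriv_shift (w : ℕ → ℝ → ℝ) (F : ℝ → ℝ) :
    ∀ j, genDeriv (fun k => w (k + 1)) j (deriv (genDeriv w 0 F)) = genDeriv w (j + 1) F := by
  intro j
  induction j with
  | zero => rfl
  | succ j IH =>
    show (fun x => deriv (genDeriv (fun k => w (k + 1)) j (deriv (genDeriv w 0 F))) x
      / w (j + 2) x) = _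
    rw [IH]
    rfl

lemma genDeriv_eq_zero_on (hU : IsOpen U)
    (hw : ∀ j < m, ContDiffOn ℝ ((m - 1 - j : ℕ)) (w j) U)
    (hw0 : ∀ j < m, ∀ x ∈ U, w j x ≠ 0)
    {a b : ℝ} (hab : a < b) (hIcc : Set.Icc a b ⊆ U)
    {F : ℝ → ℝ} (hF : ContDiffOn ℝ ((m - 1 : ℕ)) F U) (hm : 1 ≤ m)
    (hinit : ∀ j < m, genDeriv w j F a = 0)
    (hlast : ∀ x ∈ Set.Icc a b, genDeriv w (m - 1) F x = 0) :
    ∀ x ∈ Set.Icc a b, F x = 0 := by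
  have ha : a ∈ Set.Icc a b := ⟨le_refl a, le_of_lt hab⟩
  have claim : ∀ k < m, ∀ x ∈ Set.Icc a b, genDeriv w (m - 1 - k) F x = 0 := by
    intro k
    induction k with
    | zero => intro _ x hx; simpa using hlast x hx
    | succ k IHk =>
      intro hk x hx
      set j := m - 1 - (k + 1) with hj
      have hjk : m - 1 - k = j + 1 := by omega
      have hIH : ∀ y ∈ Set.Icc a b, genDeriv w (j + 1) F y = 0 := by
        intro y hy
        rw [← hjk]
        exact IHk (by omega) y hy
      have hder : ∀ y ∈ Set.Icc a b, deriv (genDeriv w j F) y = 0 := by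
        intro y hy
        have h := hIH y hy
        have hwne : w (j + 1) y ≠ 0 := hw0 (j + 1) (by omega) y (hIcc hy)
        have : deriv (genDeriv w j F) y / w (j + 1) y = 0 := h
        rcases div_eq_zero_iff.mp this with h' | h'
        · exact h'
        · exact absurd h' hwne
      have hdiff : DifferentiableOn ℝ (genDeriv w j F) (Set.Icc a b) := by
        apply DifferentiableOn.mono _ hIcc
        apply ContDiffOn.differentiableOn (genDeriv_smooth hU hw hw0 hF j (by omega))
        exact_mod_cast (by omega : m - 1 - j ≠ 0)
      have hconst : ∀ y ∈ Set.Icc a b, genDeriv w j F y = genDeriv w j F a := by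
        apply constant_of_derivWithin_zero hdiff
        intro y hy
        have hyU : y ∈ U := hIcc (Set.mem_Icc_of_Ico hy)
        have hdy : DifferentiableAt ℝ (genDeriv w j F) y :=
          genDeriv_differentiableAt hU hw hw0 hF (by omega) hyU
        rw [hdy.derivWithin ((uniqueDiffOn_Icc hab).uniqueDiffWithinAt (Set.mem_Icc_of_Ico hy))]
        exact hder y (Set.mem_Icc_of_Ico hy)
      rw [hconst x hx, hinit j (by omega)]
  intro x hx
  have h0 : genDeriv w 0 F x = 0 := by
    have := claim (m - 1) (by omega) x hx
    rwa [show m - 1 - (m - 1) = 0 from by omega] at this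
  have hwne : w 0 x ≠ 0 := hw0 0 (by omega) x (hIcc hx)
  have : F x / w 0 x = 0 := h0
  rcases div_eq_zero_iff.mp this with h' | h'
  · exact h'
  · exact absurd h' hwne

lemma genDeriv_zero_on_Ioo {a b : ℝ} {w : ℕ → ℝ → ℝ} {F : ℝ → ℝ}
    (hFz : ∀ x ∈ Set.Icc a b, F x = 0) :
    ∀ j, ∀ x ∈ Set.Ioo a b, genDeriv w j F x = 0 := by
  intro j
  induction j with
  | zero =>
    intro x hx
    show F x / w 0 x = 0
    rw [hFz x (Set.mem_Icc_of_Ioo hx), zero_div]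
  | succ j IH =>
    intro x hx
    have hev : genDeriv w j F =ᶠ[𝓝 x] (fun _ => (0 : ℝ)) := by
      filter_upwards [isOpen_Ioo.mem_nhds hx] with y hy
      exact IH y hy
    show deriv (genDeriv w j F) x / w (j + 1) x = 0
    rw [hev.deriv_eq, deriv_const, zero_div]




noncomputable def wbase (w : ℕ → ℝ → ℝ) (a : ℝ) : ℕ → ℕ → ℝ → ℝ
  | j, 0 => w j
  | j, (d + 1) => fun x => w j x * ∫ t in a..x, wbase w a (j + 1) d t

lemma contDiff_primitive {f : ℝ → ℝ} {k : ℕ} (hf : ContDiff ℝ (k : ℕ) f) (a : ℝ) :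
    ContDiff ℝ ((k + 1 : ℕ)) (fun x => ∫ t in a..x, f t) := by
  rw [show ((k + 1 : ℕ) : WithTop ℕ∞) = (k : ℕ) + 1 from (natcast_succ_eq rfl).symm,
    contDiff_succ_iff_deriv]
  refine ⟨fun x => (hf.continuous.integral_hasStrictDerivAt a x).hasDerivAt.differentiableAt,
    ?_, ?_⟩
  · intro h; exact absurd h (by simp)
  · have hd : deriv (fun x => ∫ t in a..x, f t) = f :=
      funext fun x => Continuous.deriv_integral f hf.continuous a x
    rw [hd]; exact hf

section wbaseLemmas

variable {m : ℕ} {w : ℕ → ℝ → ℝ} {a : ℝ}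

lemma wbase_contDiff (hsm : ∀ j < m, ContDiff ℝ ((m - 1 - j : ℕ)) (w j)) :
    ∀ (d j : ℕ), j + d < m → ContDiff ℝ ((m - 1 - j : ℕ)) (wbase w a j d) := by
  intro d
  induction d with
  | zero => intro j hj; exact hsm j (by omega)
  | succ d IH =>
    intro j hj
    have hin : ContDiff ℝ ((m - 1 - (j + 1) : ℕ)) (wbase w a (j + 1) d) := IH (j + 1) (by omega)
    have hprim : ContDiff ℝ ((m - 1 - j : ℕ)) (fun x => ∫ t in a..x, wbase w a (j + 1) d t) := by
      have := contDiff_primitive hin a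
      rwa [show m - 1 - (j + 1) + 1 = m - 1 - j from by omega] at this
    exact (hsm j (by omega)).mul hprim

lemma genDeriv_wbase {U : Set ℝ} (hU : IsOpen U) (hw0 : ∀ j < m, ∀ x ∈ U, w j x ≠ 0)
    (hsm : ∀ j < m, ContDiff ℝ ((m - 1 - j : ℕ)) (w j)) :
    ∀ j < m, ∀ i < m, ∀ x ∈ U,
      genDeriv w j (wbase w a 0 i) x =
        if j < i then ∫ t in a..x, wbase w a (j + 1) (i - j - 1) t
        else if j = i then 1 else 0 := by
  intro j
  induction j with
  | zero =>
    intro _ i hi x hx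
    have hwne : w 0 x ≠ 0 := hw0 0 (by omega) x hx
    cases i with
    | zero =>
      show w 0 x / w 0 x = _
      rw [div_self hwne]
      norm_num
    | succ d =>
      show (w 0 x * ∫ t in a..x, wbase w a 1 d t) / w 0 x = _
      rw [mul_div_cancel_left₀ _ hwne]
      simp [Nat.succ_sub_one]
  | succ j IH =>
    intro hj i hi x hx
    have hjm : j < m := by omega
    have hwne : w (j + 1) x ≠ 0 := hw0 (j + 1) hj x hx
    show deriv (genDeriv w j (wbase w a 0 i)) x / w (j + 1) x = _
    rcases lt_trichotomy j i with hlt | heq | hgt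
    · -- j < i
      have hev : genDeriv w j (wbase w a 0 i) =ᶠ[𝓝 x]
          (fun y => ∫ t in a..y, wbase w a (j + 1) (i - j - 1) t) := by
        filter_upwards [hU.mem_nhds hx] with y hy
        rw [IH hjm i hi y hy, if_pos hlt]
      have hcont : Continuous (wbase w a (j + 1) (i - j - 1)) :=
        (wbase_contDiff hsm (i - j - 1) (j + 1) (by omega)).continuous
      rw [hev.deriv_eq, Continuous.deriv_integral _ hcont a x]
      rcases eq_or_lt_of_le (Nat.succ_le_of_lt hlt) with hji | hji
      · -- j + 1 = i
        have h0 : i - j - 1 = 0 := by omega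
        rw [h0]
        show w (j + 1) x / w (j + 1) x = _
        rw [div_self hwne, if_neg (by omega), if_pos hji]
      · -- j + 1 < i
        obtain ⟨d, hd⟩ : ∃ d, i - j - 1 = d + 1 := ⟨i - j - 2, by omega⟩
        rw [hd]
        show (w (j + 1) x * ∫ t in a..x, wbase w a (j + 1 + 1) d t) / w (j + 1) x = _
        rw [mul_div_cancel_left₀ _ hwne, if_pos hji,
          show i - (j + 1) - 1 = d from by omega]
    · -- j = i
      subst heq
      have hev : genDeriv w j (wbase w a 0 j) =ᶠ[𝓝 x] (fun _ => (1 : ℝ)) := by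
        filter_upwards [hU.mem_nhds hx] with y hy
        rw [IH hjm j hi y hy, if_neg (lt_irrefl j), if_pos rfl]
      rw [hev.deriv_eq, deriv_const, zero_div, if_neg (by omega), if_neg (by omega)]
    · -- j > i
      have hev : genDeriv w j (wbase w a 0 i) =ᶠ[𝓝 x] (fun _ => (0 : ℝ)) := by
        filter_upwards [hU.mem_nhds hx] with y hy
        rw [IH hjm i hi y hy, if_neg (by omega), if_neg (by omega)]
      rw [hev.deriv_eq, deriv_const, zero_div, if_neg (by omega), if_neg (by omega)]

end wbaseLemmas

lemma zero_bound : ∀ (n : ℕ) (U : Set ℝ), IsOpen U → ∀ (a b : ℝ), a < b → Set.Icc a b ⊆ U →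
    ∀ (w : ℕ → ℝ → ℝ), (∀ j < n + 1, ContDiffOn ℝ ((n - j : ℕ)) (w j) U) →
    (∀ j < n + 1, ∀ x ∈ U, w j x ≠ 0) →
    ∀ (F : ℝ → ℝ), ContDiffOn ℝ ((n : ℕ)) F U →
    (∃ c, ∀ x ∈ Set.Icc a b, genDeriv w n F x = c) →
    (∃ x ∈ Set.Icc a b, F x ≠ 0) →
    ∀ (S : Finset ℝ) (μ : ℝ → ℕ), ↑S ⊆ Set.Icc a b → (∀ x ∈ S, 1 ≤ μ x ∧ μ x ≤ n + 1) →
    (∑ x ∈ S, μ x) = n + 1 → ¬ (∀ x ∈ S, VanishesTo F x (μ x)) := by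
  intro n
  induction n with
  | zero =>
    intro U hU a b hab hIcc w hw hw0 F hF hconst hne S μ hsubS hbd hsum hvan
    have hSne : S.Nonempty := by
      rcases S.eq_empty_or_nonempty with rfl | h
      · simp at hsum
      · exact h
    obtain ⟨x₀, hx₀⟩ := hSne
    have hFx₀ : F x₀ = 0 := by
      have := hvan x₀ hx₀ 0 (hbd x₀ hx₀).1
      simpa using this
    obtain ⟨c, hc⟩ := hconst
    have hc0 : c = 0 := by
      have := hc x₀ (hsubS hx₀)
      have h0 : F x₀ / w 0 x₀ = c := this
      rw [hFx₀, zero_div] at h0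
      exact h0.symm
    obtain ⟨y, hy, hFy⟩ := hne
    have h3 := hc y hy
    rw [hc0] at h3
    have : F y / w 0 y = 0 := h3
    rcases div_eq_zero_iff.mp this with h' | h'
    · exact hFy h'
    · exact hw0 0 (by omega) y (hIcc hy) h'
  | succ n IH =>
    intro U hU a b hab hIcc w hw hw0 F hF hconst hne S μ hsubS hbd hsum hvan
    have hSne : S.Nonempty := by
      rcases S.eq_empty_or_nonempty with rfl | h
      · simp at hsum
      · exact h
    set H : ℝ → ℝ := genDeriv w 0 F with hH
    have hHm : H = fun y => F y * (w 0 y)⁻¹ := funext fun y => div_eq_mul_inv _ _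
    have hw0sm : ContDiffOn ℝ ((n + 1 : ℕ)) (w 0) U := by
      have := hw 0 (by omega)
      simpa using this
    have hinv : ContDiffOn ℝ ((n + 1 : ℕ)) (fun y => (w 0 y)⁻¹) U :=
      hw0sm.inv (hw0 0 (by omega))
    have hHsm : ContDiffOn ℝ ((n + 1 : ℕ)) H U := by
      rw [hHm]; exact hF.mul hinv
    have hvH : ∀ x ∈ S, VanishesTo H x (μ x) := by
      intro x hx
      rw [hHm]
      exact vanishesTo_mul hU (hIcc (hsubS hx)) (μ x) (n + 1) (hbd x hx).2 F _ hF hinv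
        (hvan x hx)
    have hdH : ∀ x ∈ Set.Icc a b, DifferentiableAt ℝ H x := fun x hx =>
      hHsm.differentiableAt_of_isOpen hU (by omega) (hIcc hx)
    obtain ⟨S', μ', hsub', hbd', hsum', hv'⟩ :=
      rolle_count a b H hdH S hSne μ hsubS (fun x hx => (hbd x hx).1) hvH
    -- the reduced system
    set G : ℝ → ℝ := deriv H with hG
    have hGsm : ContDiffOn ℝ ((n : ℕ)) G U :=
      hHsm.deriv_of_isOpen hU (le_of_eq (natcast_succ_eq rfl))
    set w' : ℕ → ℝ → ℝ := fun k => w (k + 1) with hw'def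
    have hw' : ∀ j < n + 1, ContDiffOn ℝ ((n - j : ℕ)) (w' j) U := by
      intro j hj
      have := hw (j + 1) (by omega)
      rwa [show n + 1 - (j + 1) = n - j from by omega] at this
    have hw0' : ∀ j < n + 1, ∀ x ∈ U, w' j x ≠ 0 := fun j hj x hx =>
      hw0 (j + 1) (by omega) x hx
    have hshift : genDeriv w' n G = genDeriv w (n + 1) F := genDeriv_shift w F n
    have hconst' : ∃ c, ∀ x ∈ Set.Icc a b, genDeriv w' n G x = c := by
      obtain ⟨c, hc⟩ := hconst
      exact ⟨c, fun x hx => by rw [hshift]; exact hc x hx⟩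
    have hne' : ∃ x ∈ Set.Icc a b, G x ≠ 0 := by
      by_contra hcon
      push_neg at hcon
      have hdiff : DifferentiableOn ℝ H (Set.Icc a b) :=
        (hHsm.differentiableOn (by simp)).mono hIcc
      have hHconst : ∀ y ∈ Set.Icc a b, H y = H a := by
        apply constant_of_derivWithin_zero hdiff
        intro y hy
        rw [(hdH y (Set.mem_Icc_of_Ico hy)).derivWithin
          ((uniqueDiffOn_Icc hab).uniqueDiffWithinAt (Set.mem_Icc_of_Ico hy))]
        exact hcon y (Set.mem_Icc_of_Ico hy)
      obtain ⟨τ, hτ⟩ := hSne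
      have hFτ : F τ = 0 := by simpa using hvan τ hτ 0 (hbd τ hτ).1
      have hHa : H a = 0 := by
        rw [← hHconst τ (hsubS hτ)]
        show F τ / w 0 τ = 0
        rw [hFτ, zero_div]
      obtain ⟨y, hy, hFy⟩ := hne
      have hzero : H y = 0 := by rw [hHconst y hy, hHa]
      have hzero' : F y / w 0 y = 0 := hzero
      rcases div_eq_zero_iff.mp hzero' with h' | h'
      · exact hFy h'
      · exact hw0 0 (by omega) y (hIcc hy) h'
    have hminm : S.min' hSne ∈ S := S.min'_mem hSne
    have hmaxm : S.max' hSne ∈ S := S.max'_mem hSne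
    have hsubS' : ↑S' ⊆ Set.Icc a b := by
      intro x hx
      exact Set.Icc_subset_Icc (hsubS hminm).1 (hsubS hmaxm).2 (hsub' hx)
    have hbd'' : ∀ x ∈ S', 1 ≤ μ' x ∧ μ' x ≤ n + 1 := by
      intro x hx
      obtain ⟨hb1, hb2⟩ := hbd' x hx
      refine ⟨hb1, ?_⟩
      rcases hb2 with h | ⟨y, hy, hle⟩
      · omega
      · have := (hbd y hy).2
        omega
    have hsum'' : (∑ x ∈ S', μ' x) = n + 1 := by omega
    exact IH U hU a b hab hIcc w' hw' hw0' G hGsm hconst' hne' S' μ' hsubS' hbd'' hsum'' hv'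

theorem stmt_4 (m : ℕ) (hm : 1 ≤ m) (a b : ℝ) (hab : a < b)
    (w : ℕ → ℝ → ℝ)
    (hsm : ∀ j < m, ContDiff ℝ (m - 1 - j : ℕ) (w j))
    (hpos : ∀ j < m, ∀ x ∈ Set.Icc a b, 0 < w j x) :
    (∃ V : Submodule ℝ ((Set.Icc a b) → ℝ),
      (∀ g, g ∈ V ↔ ∃ F : ℝ → ℝ, ContDiff ℝ (m - 1 : ℕ) F ∧
        (∃ c : ℝ, ∀ x ∈ Set.Icc a b, genDeriv w (m - 1) F x = c) ∧
        g = (Set.Icc a b).restrict F) ∧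
      Module.finrank ℝ V = m) ∧
    ∀ F : ℝ → ℝ, ContDiff ℝ (m - 1 : ℕ) F →
      (∃ c : ℝ, ∀ x ∈ Set.Icc a b, genDeriv w (m - 1) F x = c) →
      (∃ x ∈ Set.Icc a b, F x ≠ 0) → AtMostZeros m (Set.Icc a b) F := by
  set U : Set ℝ := ⋂ j : Fin m, w j ⁻¹' Set.Ioi 0 with hUdef
  have hUopen : IsOpen U :=
    isOpen_iInter_of_finite fun j => ((hsm j j.2).continuous.isOpen_preimage _ isOpen_Ioi)
  have hIccU : Set.Icc a b ⊆ U := fun x hx => Set.mem_iInter.mpr fun j => hpos j j.2 x hx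
  have hw0 : ∀ j < m, ∀ x ∈ U, w j x ≠ 0 := fun j hj x hx =>
    ne_of_gt (Set.mem_iInter.mp hx ⟨j, hj⟩)
  have hwOn : ∀ j < m, ContDiffOn ℝ ((m - 1 - j : ℕ)) (w j) U := fun j hj => (hsm j hj).contDiffOn
  have ha : a ∈ Set.Icc a b := ⟨le_refl a, le_of_lt hab⟩
  have haU : a ∈ U := hIccU ha
  have him1 : m - 1 < m := by omega
  constructor
  · -- the m-dimensional space
    set u : Fin m → ℝ → ℝ := fun i => wbase w a 0 i with hu
    have husm : ∀ i : Fin m, ContDiff ℝ ((m - 1 : ℕ)) (u i) := by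
      intro i
      have := wbase_contDiff (a := a) hsm (i : ℕ) 0 (by have := i.2; omega)
      simpa using this
    have hsumsm : ∀ (c : Fin m → ℝ), ContDiff ℝ ((m - 1 : ℕ)) (fun y => ∑ i, c i * u i y) :=
      fun c => ContDiff.sum fun i _ => contDiff_const.mul (husm i)
    have huval : ∀ j < m, ∀ i : Fin m, ∀ x ∈ U,
        genDeriv w j (u i) x = if j < (i : ℕ) then
          ∫ t in a..x, wbase w a (j + 1) ((i : ℕ) - j - 1) t
          else if j = (i : ℕ) then 1 else 0 := fun j hj i x hx =>
      genDeriv_wbase hUopen hw0 hsm j hj i i.2 x hx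
    have hgen : ∀ (c : Fin m → ℝ) (j : ℕ), j < m → ∀ x ∈ U,
        genDeriv w j (fun y => ∑ i, c i * u i y) x = ∑ i, c i * genDeriv w j (u i) x := by
      intro c j hj x hx
      rw [genDeriv_sum hUopen hwOn hw0 Finset.univ (fun i => fun y => c i * u i y)
        (fun i => (contDiff_const.mul (husm i)).contDiffOn) j hj x hx]
      exact Finset.sum_congr rfl fun i _ =>
        genDeriv_const_mul hUopen hwOn hw0 ((husm i).contDiffOn) (c i) j hj x hx
    have hval_a : ∀ j, j < m → ∀ i : Fin m,
        genDeriv w j (u i) a = if j = (i : ℕ) then 1 else 0 := by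
      intro j hj i
      rw [huval j hj i a haU]
      by_cases h : j < (i : ℕ)
      · rw [if_pos h, intervalIntegral.integral_same, if_neg (by omega)]
      · rw [if_neg h]
    have hval_top : ∀ i : Fin m, ∀ x ∈ U,
        genDeriv w (m - 1) (u i) x = if (i : ℕ) = m - 1 then 1 else 0 := by
      intro i x hx
      rw [huval (m - 1) him1 i x hx, if_neg (by have := i.2; omega)]
      by_cases h : (m - 1) = (i : ℕ)
      · rw [if_pos h, if_pos h.symm]
      · rw [if_neg h, if_neg (fun hh => h hh.symm)]
    set im1 : Fin m := ⟨m - 1, him1⟩ with him1def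
    refine ⟨Submodule.span ℝ (Set.range fun i : Fin m => (Set.Icc a b).restrict (u i)), ?_, ?_⟩
    · intro g
      constructor
      · intro hg
        obtain ⟨c, hc⟩ := (Submodule.mem_span_range_iff_exists_fun ℝ).mp hg
        refine ⟨fun y => ∑ i, c i * u i y, hsumsm c, ⟨c im1, ?_⟩, ?_⟩
        · intro x hx
          rw [hgen c (m - 1) him1 x (hIccU hx)]
          rw [Finset.sum_eq_single_of_mem im1 (Finset.mem_univ im1) ?side]
          · rw [hval_top im1 x (hIccU hx), if_pos rfl, mul_one]
          case side =>
            intro i _ hne'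
            rw [hval_top i x (hIccU hx),
              if_neg (fun h => hne' (Fin.ext h)), mul_zero]
        · rw [← hc]
          funext x
          simp [Set.restrict]
      · rintro ⟨F, hFsm, ⟨c, hcF⟩, rfl⟩
        set γ : Fin m → ℝ := fun i => genDeriv w i F a with hγ
        set G : ℝ → ℝ := fun y => F y + ∑ i, (-γ i) * u i y with hGdef
        have hGsm : ContDiffOn ℝ ((m - 1 : ℕ)) G U :=
          (hFsm.add (hsumsm fun i => -γ i)).contDiffOn
        have hGgen : ∀ j < m, ∀ x ∈ U, genDeriv w j G x
            = genDeriv w j F x + ∑ i, (-γ i) * genDeriv w j (u i) x := by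
          intro j hj x hx
          rw [show G = fun y => F y + (fun z => ∑ i, (-γ i) * u i z) y from rfl]
          rw [genDeriv_add hUopen hwOn hw0 hFsm.contDiffOn
            (hsumsm fun i => -γ i).contDiffOn j hj x hx,
            hgen (fun i => -γ i) j hj x hx]
        have hinit : ∀ j < m, genDeriv w j G a = 0 := by
          intro j hj
          rw [hGgen j hj a haU]
          rw [Finset.sum_eq_single_of_mem (⟨j, hj⟩ : Fin m) (Finset.mem_univ _) ?side2]
          · rw [hval_a j hj ⟨j, hj⟩, if_pos rfl, mul_one]
            show genDeriv w j F a + -(genDeriv w j F a) = 0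
            ring
          case side2 =>
            intro i _ hne'
            rw [hval_a j hj i, if_neg (fun h => hne' (Fin.ext h.symm)), mul_zero]
        have hlast : ∀ x ∈ Set.Icc a b, genDeriv w (m - 1) G x = 0 := by
          intro x hx
          rw [hGgen (m - 1) him1 x (hIccU hx), hcF x hx]
          rw [Finset.sum_eq_single_of_mem im1 (Finset.mem_univ im1) ?side3]
          · rw [hval_top im1 x (hIccU hx), if_pos rfl, mul_one]
            have : γ im1 = c := by
              have := hcF a ha
              rw [hγ]
              simpa using this
            rw [this]
            ring
          case side3 =>
            intro i _ hne'
            rw [hval_top i x (hIccU hx), if_neg (fun h => hne' (Fin.ext h)), mul_zero]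
        have hzero := genDeriv_eq_zero_on hUopen hwOn hw0 hab hIccU hGsm hm hinit hlast
        have hrep : (Set.Icc a b).restrict F = ∑ i, γ i • (Set.Icc a b).restrict (u i) := by
          funext x
          have h := hzero x x.2
          have h2 : F x + ∑ i, (-γ i) * u i (x : ℝ) = 0 := h
          have h3 : F (x : ℝ) = ∑ i, γ i * u i (x : ℝ) := by
            have : ∑ i, (-γ i) * u i (x : ℝ) = -∑ i, γ i * u i (x : ℝ) := by
              rw [← Finset.sum_neg_distrib]
              exact Finset.sum_congr rfl fun i _ => by ring
            rw [this] at h2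
            linarith
          simpa [Set.restrict] using h3
        rw [hrep]
        exact Submodule.sum_mem _ fun i _ =>
          Submodule.smul_mem _ _ (Submodule.subset_span ⟨i, rfl⟩)
    · -- finrank
      have hli : LinearIndependent ℝ (fun i : Fin m => (Set.Icc a b).restrict (u i)) := by
        rw [Fintype.linearIndependent_iff]
        intro c hcsum
        have hK0 : ∀ x ∈ Set.Icc a b, (fun y => ∑ i, c i * u i y) x = 0 := by
          intro x hx
          have := congrFun hcsum ⟨x, hx⟩
          simpa [Set.restrict] using this
        set x0 : ℝ := (a + b) / 2 with hx0def
        have hx0 : x0 ∈ Set.Ioo a b := ⟨by simp [hx0def]; linarith, by simp [hx0def]; linarith⟩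
        have hx0U : x0 ∈ U := hIccU (Set.mem_Icc_of_Ioo hx0)
        have hLK : ∀ j, j < m → (∑ i, c i * genDeriv w j (u i) x0) = 0 := by
          intro j hj
          rw [← hgen c j hj x0 hx0U]
          exact genDeriv_zero_on_Ioo hK0 j x0 hx0
        have hdown : ∀ k, ∀ i : Fin m, m - k ≤ (i : ℕ) → c i = 0 := by
          intro k
          induction k with
          | zero => intro i hi; exact absurd hi (by have := i.2; omega)
          | succ k IHk =>
            intro i hi
            by_cases hcase : m - k ≤ (i : ℕ)
            · exact IHk i hcase
            · have h0 := hLK i i.2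
              have hs : (∑ i' : Fin m, c i' * genDeriv w (i : ℕ) (u i') x0)
                  = c i * genDeriv w (i : ℕ) (u i) x0 := by
                apply Finset.sum_eq_single_of_mem i (Finset.mem_univ i)
                intro i' _ hne'
                have hvne : (i' : ℕ) ≠ (i : ℕ) := fun h => hne' (Fin.ext h)
                rcases lt_or_gt_of_ne hvne with hlt | hgt
                · rw [huval i i.2 i' x0 hx0U, if_neg (by omega), if_neg (by omega), mul_zero]
                · rw [IHk i' (by omega), zero_mul]
              rw [hs, huval i i.2 i x0 hx0U, if_neg (lt_irrefl _), if_pos rfl, mul_one] at h0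
              exact h0
        exact fun i => hdown m i (by omega)
      rw [finrank_span_eq_card hli, Fintype.card_fin]
  · -- zero bound
    intro F hFsm hconst hne
    intro h τ μ hinj hmem hbd hsum hvan
    classical
    set S : Finset ℝ := Finset.image τ Finset.univ with hS
    set ν : ℝ → ℕ := fun x => if hx : ∃ j, τ j = x then μ hx.choose else 0 with hν
    have hντ : ∀ j, ν (τ j) = μ j := by
      intro j
      have hex : ∃ j', τ j' = τ j := ⟨j, rfl⟩
      rw [hν]
      simp only [dif_pos hex]
      have := hex.choose_spec
      rw [hinj this]
    have hsubS : ↑S ⊆ Set.Icc a b := by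
      intro x hx
      simp only [hS, Finset.coe_image, Set.mem_image] at hx
      obtain ⟨j, _, rfl⟩ := hx
      exact hmem j
    have hbdS : ∀ x ∈ S, 1 ≤ ν x ∧ ν x ≤ (m - 1) + 1 := by
      intro x hx
      obtain ⟨j, _, rfl⟩ := Finset.mem_image.mp hx
      rw [hντ j]
      have := hbd j
      omega
    have hsumS : (∑ x ∈ S, ν x) = (m - 1) + 1 := by
      rw [hS, Finset.sum_image (fun i _ j _ hij => hinj hij)]
      rw [show (m - 1) + 1 = m from by omega, ← hsum]
      exact Finset.sum_congr rfl fun j _ => hντ j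
    have hvanS : ∀ x ∈ S, VanishesTo F x (ν x) := by
      intro x hx
      obtain ⟨j, _, rfl⟩ := Finset.mem_image.mp hx
      rw [hντ j]
      exact hvan j
    have hwOn' : ∀ j < (m - 1) + 1, ContDiffOn ℝ (((m - 1) - j : ℕ)) (w j) U := by
      intro j hj
      have := hwOn j (by omega)
      rwa [show m - 1 - j = (m - 1) - j from rfl] at this
    have hw0' : ∀ j < (m - 1) + 1, ∀ x ∈ U, w j x ≠ 0 := fun j hj x hx => hw0 j (by omega) x hx
    exact zero_bound (m - 1) U hUopen a b hab hIccU w hwOn' hw0' F hFsm.contDiffOn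
      hconst hne S ν hsubS hbdS hsumS hvanS
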